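/- Let X be a locally topologically Noetherian scheme and X = ⋃ U_i an open cover. Then X satisfies (S₁') if and only if each U_i satisfies (S₁'). Moreover, if X satisfies (S₁') then every open subscheme of X satisfies (S₁'). -/

import Mathlib

open AlgebraicGeometry CategoryTheory TopologicalSpace

/-- A scheme `X` satisfies condition (S₁') if every dense open subscheme `U ⊆ X` is
schematically dense, i.e. `𝒪_X → j_* 𝒪_U` is injective, i.e. for every open `V` the
restriction `𝒪_X(V) → 𝒪_X(U ⊓ V)` is injective. -/
def SchemeSOnePrime (X : Scheme) : Prop :=
  ∀ U : X.Opens, Dense (U : Set X) →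
    ∀ V : X.Opens,
      Function.Injective (X.presheaf.map (homOfLE (inf_le_right : U ⊓ V ≤ V)).op)

lemma map_inj_congr {X : Scheme} {A B A' B' : X.Opens} (hA : A' = A) (hB : B' = B)
    (f : Opposite.op B ⟶ Opposite.op A) (g : Opposite.op B' ⟶ Opposite.op A')
    (h : Function.Injective (X.presheaf.map g)) :
    Function.Injective (X.presheaf.map f) := by
  subst hA; subst hB
  have : f = g := Quiver.Hom.unop_inj (Subsingleton.elim _ _)
  rw [this]; exact h

lemma SchemeSOnePrime.restrictOpen {X : Scheme} (hX : SchemeSOnePrime X) (V : X.Opens) :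
    SchemeSOnePrime V.toScheme := by
  intro W hW O
  set C : X.Opens := ⟨(closure (V : Set X))ᶜ, isClosed_closure.isOpen_compl⟩ with hC
  set D : X.Opens := V.ι ''ᵁ W ⊔ C with hDdef
  have hemb : Topology.IsEmbedding V.ι.base := V.ι.isOpenEmbedding.isEmbedding
  have himW : (↑(V.ι ''ᵁ W) : Set X) = V.ι.base '' (W : Set V.toScheme) := rfl
  have hVsub : (V : Set X) ⊆ closure (V.ι.base '' (W : Set V.toScheme)) := by
    intro x hx
    exact hemb.isInducing.dense_iff.mp hW ⟨x, hx⟩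
  have hD : Dense (D : Set X) := by
    intro x
    have hcl : closure (V : Set X) ∪ (closure (V : Set X))ᶜ ⊆ closure (D : Set X) := by
      apply Set.union_subset
      · refine (closure_minimal hVsub isClosed_closure).trans (closure_mono ?_)
        rw [← himW]
        exact Set.subset_union_of_subset_left le_rfl _
      · exact subset_closure.trans' (Set.subset_union_right (s := (↑(V.ι ''ᵁ W) : Set X)))
    exact hcl ((Set.union_compl_self _).symm ▸ Set.mem_univ x)
  have hOV : (↑(V.ι ''ᵁ O) : Set X) ⊆ (V : Set X) := V.ι_image_le O
  have hEq : D ⊓ (V.ι ''ᵁ O) = V.ι ''ᵁ (W ⊓ O) := by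
    apply Opens.ext
    show ((↑(V.ι ''ᵁ W) : Set X) ∪ ↑C) ∩ ↑(V.ι ''ᵁ O) = ↑(V.ι ''ᵁ (W ⊓ O))
    have h1 : (↑C : Set X) ∩ ↑(V.ι ''ᵁ O) = ∅ := by
      apply Set.eq_empty_of_forall_notMem
      rintro x ⟨hxC, hxO⟩
      exact hxC (subset_closure (hOV hxO))
    have h2 : (↑(V.ι ''ᵁ (W ⊓ O)) : Set X) = V.ι.base '' ((W : Set V.toScheme) ∩ ↑O) := rfl
    rw [Set.union_inter_distrib_right, h1, Set.union_empty, h2,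
      Set.image_inter hemb.injective]
    rfl
  rw [Scheme.Opens.toScheme_presheaf_map]
  exact map_inj_congr hEq rfl _ _ (hX D hD (V.ι ''ᵁ O))

lemma SchemeSOnePrime.glue {X : Scheme} {κ : Type*} (𝒰 : κ → X.Opens) (hcov : iSup 𝒰 = ⊤)
    (h : ∀ i, SchemeSOnePrime (𝒰 i).toScheme) : SchemeSOnePrime X := by
  intro U hU V a b hab
  have hchoice : ∀ x : (V : Set X), ∃ i, (x : X) ∈ 𝒰 i := by
    intro x
    have hx' : (x : X) ∈ iSup 𝒰 := by rw [hcov]; trivial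
    exact Opens.mem_iSup.mp hx'
  choose fc hfc using hchoice
  fapply X.sheaf.eq_of_locally_eq' (fun x : (V : Set X) => 𝒰 (fc x) ⊓ V) V
    (fun x => homOfLE (inf_le_right : 𝒰 (fc x) ⊓ V ≤ V))
  · intro x hx
    exact Opens.mem_iSup.mpr ⟨⟨x, hx⟩, hfc ⟨x, hx⟩, hx⟩
  · intro p
    set Ui := 𝒰 (fc p) with hUi
    have hWdense : Dense (↑(Ui.ι ⁻¹ᵁ U) : Set Ui.toScheme) := by
      rw [Ui.ι.isOpenEmbedding.isEmbedding.isInducing.dense_iff]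
      intro x
      have h1 : (Ui : Set X) ⊆ closure ((Ui : Set X) ∩ U) := hU.open_subset_closure_inter Ui.2
      have himg : Ui.ι.base '' (↑(Ui.ι ⁻¹ᵁ U) : Set Ui.toScheme) = (Ui : Set X) ∩ U := by
        show Ui.ι.base '' (Ui.ι.base ⁻¹' (U : Set X)) = _
        rw [Set.image_preimage_eq_inter_range, Scheme.Opens.range_ι, Set.inter_comm]
      rw [himg]
      exact h1 x.2
    have key := h (fc p) (Ui.ι ⁻¹ᵁ U) hWdense (Ui.ι ⁻¹ᵁ V)
    rw [Scheme.Opens.toScheme_presheaf_map] at key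
    have hB : Ui.ι ''ᵁ (Ui.ι ⁻¹ᵁ V) = Ui ⊓ V := by
      rw [Scheme.Hom.image_preimage_eq_opensRange_inf, Scheme.Opens.opensRange_ι]
    have hA : Ui.ι ''ᵁ (Ui.ι ⁻¹ᵁ U ⊓ Ui.ι ⁻¹ᵁ V) = Ui ⊓ (U ⊓ V) := by
      have : Ui.ι ⁻¹ᵁ U ⊓ Ui.ι ⁻¹ᵁ V = Ui.ι ⁻¹ᵁ (U ⊓ V) := rfl
      rw [this, Scheme.Hom.image_preimage_eq_opensRange_inf, Scheme.Opens.opensRange_ι]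
    have key' : Function.Injective (X.presheaf.map
        (homOfLE (inf_le_inf_left Ui inf_le_right : Ui ⊓ (U ⊓ V) ≤ Ui ⊓ V)).op) :=
      map_inj_congr hA hB _ _ key
    apply key'
    have comp1 : ∀ (c : X.presheaf.obj (Opposite.op V)),
        X.presheaf.map (homOfLE (inf_le_inf_left Ui inf_le_right : Ui ⊓ (U ⊓ V) ≤ Ui ⊓ V)).op
          (X.presheaf.map (homOfLE (inf_le_right : Ui ⊓ V ≤ V)).op c) =
        X.presheaf.map (homOfLE (inf_le_right : Ui ⊓ (U ⊓ V) ≤ U ⊓ V)).op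
          (X.presheaf.map (homOfLE (inf_le_right : U ⊓ V ≤ V)).op c) := by
      intro c
      rw [← comp_apply, ← comp_apply, ← X.presheaf.map_comp, ← X.presheaf.map_comp]
      congr 1
    show X.presheaf.map _ (X.presheaf.map _ a) = X.presheaf.map _ (X.presheaf.map _ b)
    rw [comp1 a, comp1 b, hab]

/-- Let `X` be a locally topologically Noetherian scheme and `X = ⋃ Uᵢ` an open cover.
Then `X` satisfies (S₁') iff each `Uᵢ` does; moreover if `X` satisfies (S₁') then so
does every open subscheme. -/
theorem stmt_14 (X : Scheme)
    (hNoeth : ∀ x : X, ∃ U : X.Opens, x ∈ U ∧ NoetherianSpace (U : Set X))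
    {ι : Type*} (𝒰 : ι → X.Opens) (hcov : iSup 𝒰 = ⊤) :
    (SchemeSOnePrime X ↔ ∀ i, SchemeSOnePrime (𝒰 i).toScheme) ∧
      (SchemeSOnePrime X → ∀ V : X.Opens, SchemeSOnePrime V.toScheme) := by
  refine ⟨⟨fun hX i => hX.restrictOpen _, SchemeSOnePrime.glue 𝒰 hcov⟩,
    fun hX V => hX.restrictOpen V⟩
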